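/- Let p be a prime, n ≥ 1 and m ≥ 0 integers, ι a finite index type, and for each i ∈ ι let A_i be a finite abelian p-group. Let A = ∏_{i} A_i, let D be a subgroup of A of index at most p^m, and for each i let D_i = D ∩ A_i, where A_i is viewed as a subgroup of A via the embedding that is the identity in the i-th coordinate and 0 elsewhere. Suppose |D_i| ≤ p^n for all i. Then there is a subgroup E of A with E ≤ D, with relative index [D : E] ≤ p^{⌊(n+m)(1+log(n+m))⌋} (log the natural logarithm, ⌊·⌋ the floor), such that E ∩ A_i = 0 for all i ∈ ι. -/

import Mathlib

open Finset Function

/-- An injective additive hom `ZMod a →+ ZMod b` when `a ∣ b ≠ 0`. -/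
lemma zmod_exists_injective_hom (a b : ℕ) (ha : a ∣ b) (hb : b ≠ 0) :
    ∃ f : ZMod a →+ ZMod b, Function.Injective f := by
  have ha0 : a ≠ 0 := fun h => hb (by simpa [h] using ha)
  have hq0 : b / a ≠ 0 := Nat.div_ne_zero_iff.mpr ⟨ha0, Nat.le_of_dvd (Nat.pos_of_ne_zero hb) ha⟩
  set f0 : ℤ →+ ZMod b := (b / a) • Int.castAddHom (ZMod b) with hf0
  have hfa : f0 (a : ℤ) = 0 := by
    simp only [hf0, AddMonoidHom.nsmul_apply, Int.coe_castAddHom]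
    rw [nsmul_eq_mul]
    push_cast
    rw [← Nat.cast_mul, Nat.div_mul_cancel ha]
    exact ZMod.natCast_self b
  refine ⟨ZMod.lift a ⟨f0, hfa⟩, (ZMod.lift_injective a).mpr ?_⟩
  intro m hm
  simp only [hf0, AddMonoidHom.nsmul_apply, Int.coe_castAddHom] at hm
  rw [nsmul_eq_mul] at hm
  have hm2 : ((((b/a : ℕ) : ℤ) * m : ℤ) : ZMod b) = 0 := by rw [Int.cast_mul, Int.cast_natCast]; exact hm
  rw [ZMod.intCast_zmod_eq_zero_iff_dvd] at hm2 ⊢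
  rename' hm2 => hm
  have hb' : (b : ℤ) = ((b/a : ℕ) : ℤ) * (a : ℤ) := by
    rw [← Nat.cast_mul, Nat.div_mul_cancel ha]
  rw [hb'] at hm
  exact (mul_dvd_mul_iff_left (by exact_mod_cast hq0)).mp hm

/-- Rank the elements of a finite type by decreasing weight `e`, so that the `j`-th element
(0-indexed) has weight at most `k / (j+1)`. -/
lemma exists_rank_injection {ι : Type} [Fintype ι] (e : ι → ℕ) (he : ∀ t, 1 ≤ e t) (k : ℕ)
    (hk : ∑ t, e t ≤ k) :
    ∃ σ : ι → Fin k, Function.Injective σ ∧ ∀ t, ((σ t : ℕ) + 1) * e t ≤ k := by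
  classical
  have hek : ∀ t, e t ≤ k := fun t =>
    le_trans (Finset.single_le_sum (f := e) (fun _ _ => Nat.zero_le _) (Finset.mem_univ t)) hk
  let ρ := Fintype.equivFin ι
  letI : LinearOrder ι := LinearOrder.lift'
    (fun t => toLex ((k - e t, ρ t) : ℕ × ℕ))
    (fun s t h => ρ.injective (Fin.val_injective (congrArg Prod.snd (toLex.injective h))))
  have hle : ∀ s t : ι, s ≤ t → e t ≤ e s := by
    intro s t h
    have h1 : k - e s ≤ k - e t := by
      rcases (Prod.Lex.le_iff.mp h) with h' | ⟨h', _⟩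
      · exact le_of_lt h'
      · exact le_of_eq h'
    have := Nat.sub_le_sub_left h1 k
    rwa [Nat.sub_sub_self (hek t), Nat.sub_sub_self (hek s)] at this
  have hck : Fintype.card ι ≤ k := by
    calc Fintype.card ι = ∑ _t : ι, 1 := by simp
    _ ≤ ∑ t, e t := Finset.sum_le_sum (fun t _ => he t)
    _ ≤ k := hk
  let σ0 : ι ≃o Fin (Fintype.card ι) := (monoEquivOfFin ι rfl).symm
  refine ⟨fun t => Fin.castLE hck (σ0 t), fun s t h => σ0.injective (Fin.castLE_injective hck h),
    fun t => ?_⟩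
  have hcard : (Finset.univ.filter (fun s : ι => s ≤ t)).card = (σ0 t : ℕ) + 1 := by
    have : (Finset.univ.filter (fun s : ι => s ≤ t)).card
        = (Finset.univ.filter (fun j : Fin (Fintype.card ι) => j ≤ σ0 t)).card := by
      apply Finset.card_bij (fun s _ => σ0 s)
      · intro s hs
        simp only [Finset.mem_filter, Finset.mem_univ, true_and] at hs ⊢
        exact σ0.le_iff_le.mpr hs
      · intro s _ s' _ h; exact σ0.injective h
      · intro j hj
        refine ⟨σ0.symm j, ?_, by simp⟩
        simp only [Finset.mem_filter, Finset.mem_univ, true_and] at hj ⊢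
        simpa using σ0.symm.le_iff_le.mpr hj
    rw [this]
    rw [show (Finset.univ.filter (fun j : Fin (Fintype.card ι) => j ≤ σ0 t)) = Finset.Iic (σ0 t)
      by ext j; simp]
    exact Fin.card_Iic _
  calc ((Fin.castLE hck (σ0 t) : ℕ) + 1) * e t
      = ∑ _s ∈ Finset.univ.filter (fun s : ι => s ≤ t), e t := by
        rw [Finset.sum_const, hcard]; simp [mul_comm]
    _ ≤ ∑ s ∈ Finset.univ.filter (fun s : ι => s ≤ t), e s :=
        Finset.sum_le_sum (fun s hs => hle s t (Finset.mem_filter.mp hs).2)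
    _ ≤ ∑ s, e s := Finset.sum_le_sum_of_subset (Finset.filter_subset _ _)
    _ ≤ k := hk

/-- Any finite abelian group of order dividing `p ^ k` embeds into the fixed group
`∏ j : Fin k, ZMod (p ^ (k / (j+1)))`. -/
lemma exists_injective_monoidHom_pi_zmod (p : ℕ) (hp : p.Prime) (k : ℕ) (G : Type*)
    [CommGroup G] [Finite G] (hG : Nat.card G ∣ p ^ k) :
    ∃ g : G →* (∀ j : Fin k, Multiplicative (ZMod (p ^ (k / ((j : ℕ) + 1))))),
      Function.Injective g := by
  classical
  obtain ⟨ι, hι, nn, h1, ⟨eqv⟩⟩ := CommGroup.equiv_prod_multiplicative_zmod_of_finite G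
  have hcard : Nat.card G = ∏ t, nn t := by
    rw [Nat.card_congr eqv.toEquiv, Nat.card_pi]
    congr 1; ext t
    rw [Nat.card_congr (Multiplicative.toAdd (α := ZMod (nn t))), Nat.card_zmod]
  have hdvd : ∀ t, nn t ∣ p ^ k := fun t =>
    dvd_trans (hcard ▸ Finset.dvd_prod_of_mem nn (Finset.mem_univ t)) hG
  choose e he1 he2 using fun t => (Nat.dvd_prime_pow hp).mp (hdvd t)
  have he : ∀ t, 1 ≤ e t := by
    intro t
    refine Nat.one_le_iff_ne_zero.mpr (fun h0 => ?_)
    have h2 := h1 t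
    rw [he2 t, h0, pow_zero] at h2
    omega
  have hsum : ∑ t, e t ≤ k := by
    have : p ^ (∑ t, e t) ∣ p ^ k := by
      rw [← Finset.prod_pow_eq_pow_sum]
      calc ∏ t, p ^ e t = ∏ t, nn t := by exact Finset.prod_congr rfl (fun t _ => (he2 t).symm)
      _ = Nat.card G := hcard.symm
      _ ∣ p ^ k := hG
    exact (Nat.pow_dvd_pow_iff_le_right hp.one_lt).mp this
  obtain ⟨σ, hσinj, hσ⟩ := exists_rank_injection e he k hsum
  -- per-component injective additive homs
  have hcomp : ∀ t, ∃ f : ZMod (nn t) →+ ZMod (p ^ (k / ((σ t : ℕ) + 1))),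
      Function.Injective f := by
    intro t
    refine zmod_exists_injective_hom _ _ ?_ (pow_ne_zero _ hp.pos.ne')
    rw [he2 t]
    refine pow_dvd_pow p ?_
    exact (Nat.le_div_iff_mul_le (Nat.succ_pos _)).mpr (by rw [mul_comm]; exact hσ t)
  choose φ hφ using hcomp
  set N : Fin k → Type := fun j => Multiplicative (ZMod (p ^ (k / ((j : ℕ) + 1)))) with hN
  set Φ : (∀ t, Multiplicative (ZMod (nn t))) →* (∀ j, N j) :=
    ∏ t, (MonoidHom.mulSingle N (σ t)).comp
      ((AddMonoidHom.toMultiplicative (φ t)).comp (Pi.evalMonoidHom _ t)) with hΦ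
  have hΦapply : ∀ x t, Φ x (σ t) = (AddMonoidHom.toMultiplicative (φ t)) (x t) := by
    intro x t
    rw [hΦ, MonoidHom.finset_prod_apply, Finset.prod_apply]
    rw [Finset.prod_eq_single t]
    · simp
    · intro t' _ ht'
      simp only [MonoidHom.comp_apply, MonoidHom.mulSingle_apply]
      exact Pi.mulSingle_eq_of_ne (fun h => ht' (hσinj h).symm) _
    · intro h; exact absurd (Finset.mem_univ t) h
  have hΦinj : Function.Injective Φ := by
    intro x y h
    funext t
    have := congrArg (fun z => z (σ t)) h
    rw [hΦapply x t, hΦapply y t] at this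
    exact hφ t (by exact_mod_cast this)
  exact ⟨Φ.comp eqv.toMonoidHom, hΦinj.comp eqv.injective⟩

lemma sum_div_le_floor_mul_one_add_log (k : ℕ) :
    ∑ j ∈ Finset.range k, k / (j + 1) ≤ ⌊(k : ℝ) * (1 + Real.log k)⌋₊ := by
  refine Nat.le_floor ?_
  calc ((∑ j ∈ Finset.range k, k / (j + 1) : ℕ) : ℝ)
      = ∑ j ∈ Finset.range k, ((k / (j + 1) : ℕ) : ℝ) := by push_cast; rfl
    _ ≤ ∑ j ∈ Finset.range k, (k : ℝ) / ((j : ℝ) + 1) := by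
        refine Finset.sum_le_sum (fun j _ => ?_)
        exact_mod_cast Nat.cast_div_le (m := k) (n := j+1)
    _ = (k : ℝ) * ∑ j ∈ Finset.range k, 1 / ((j : ℝ) + 1) := by
        rw [Finset.mul_sum]; refine Finset.sum_congr rfl (fun j _ => by ring)
    _ = (k : ℝ) * (harmonic k : ℝ) := by
        congr 1
        rw [harmonic]
        push_cast
        refine Finset.sum_congr rfl (fun j _ => by rw [one_div])
    _ ≤ (k : ℝ) * (1 + Real.log k) := by
        exact mul_le_mul_of_nonneg_left (harmonic_le_one_add_log k) (Nat.cast_nonneg k)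


/-- Let `p` be a prime, `n ≥ 1`, `m ≥ 0`, `ι` a finite index type, and `A i` finite abelian
`p`-groups. Let `D` be a subgroup of `A = ∏ i, A i` of index at most `p ^ m`, and let
`D i = D ⊓ A i` (with `A i` embedded via `MonoidHom.mulSingle`). If `|D i| ≤ p ^ n` for all `i`,
then there is a subgroup `E ≤ D` with `[D : E] ≤ p ^ ⌊(n + m) * (1 + log (n + m))⌋` such that
`E ⊓ A i = ⊥` for all `i`. -/
theorem exists_subgroup_relindex_le_inf_single_eq_bot
    (p : ℕ) (hp : p.Prime) (n m : ℕ) (hn : 1 ≤ n)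
    (ι : Type) [Fintype ι] [DecidableEq ι]
    (A : ι → Type) [∀ i, CommGroup (A i)] [∀ i, Finite (A i)]
    (hA : ∀ i, ∃ k : ℕ, Nat.card (A i) = p ^ k)
    (D : Subgroup (∀ i, A i)) (hD : D.index ≤ p ^ m)
    (hDi : ∀ i, Nat.card ↥(D ⊓ (MonoidHom.mulSingle A i).range) ≤ p ^ n) :
    ∃ E : Subgroup (∀ i, A i), E ≤ D ∧
      E.relIndex D ≤ p ^ ⌊((n + m : ℕ) : ℝ) * (1 + Real.log ((n + m : ℕ) : ℝ))⌋₊ ∧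
      ∀ i, E ⊓ (MonoidHom.mulSingle A i).range = ⊥ := by
  classical
  set k := n + m with hk
  set S : ι → Subgroup (∀ i, A i) := fun i => (MonoidHom.mulSingle A i).range with hS
  haveI : Finite (∀ i, A i) := Pi.finite
  have hinj : ∀ i, Function.Injective (MonoidHom.mulSingle A i) :=
    fun i a b h => Pi.mulSingle_injective (M := A) i h
  -- Step 1 : each `A i` has order dividing `p ^ k`
  have hAk : ∀ i, Nat.card (A i) ∣ p ^ k := by
    intro i
    obtain ⟨ki, hki⟩ := hA i
    have h1 : Nat.card ↥(S i)
        = Nat.card ↥(D.subgroupOf (S i)) * (D.subgroupOf (S i)).index :=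
      (Subgroup.card_mul_index _).symm
    have h2 : Nat.card ↥(D.subgroupOf (S i)) = Nat.card ↥(D ⊓ S i) := by
      rw [← Subgroup.inf_subgroupOf_right]
      exact Nat.card_congr (Subgroup.subgroupOfEquivOfLe inf_le_right).toEquiv
    have h4 : D.relIndex (S i) ≤ p ^ m := by
      refine le_trans ?_ hD
      rw [← Subgroup.relIndex_top_right (H := D)]
      exact Subgroup.relIndex_le_of_le_right le_top
        (by rw [Subgroup.relIndex_top_right]; exact Subgroup.index_ne_zero_of_finite)
    have hcardS : Nat.card (A i) = Nat.card ↥(S i) :=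
      Nat.card_congr (MonoidHom.ofInjective (hinj i)).toEquiv
    have hle : Nat.card (A i) ≤ p ^ k := by
      rw [hcardS, h1, h2]
      calc Nat.card ↥(D ⊓ S i) * (D.subgroupOf (S i)).index
          ≤ p ^ n * p ^ m := Nat.mul_le_mul (hDi i) h4
        _ = p ^ k := by rw [← pow_add]
    rw [hki] at hle ⊢
    exact pow_dvd_pow p ((Nat.pow_le_pow_iff_right hp.one_lt).mp hle)
  -- Step 2 : injective homs into the fixed target group
  haveI hNZ : ∀ j : Fin k, NeZero (p ^ (k / ((j : ℕ) + 1))) :=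
    fun j => ⟨pow_ne_zero _ hp.pos.ne'⟩
  set F := ∀ j : Fin k, Multiplicative (ZMod (p ^ (k / ((j : ℕ) + 1)))) with hF
  have hg : ∀ i, ∃ g : A i →* F, Function.Injective g :=
    fun i => exists_injective_monoidHom_pi_zmod p hp k (A i) (hAk i)
  choose g hginj using hg
  set f : (∀ i, A i) →* F := ∏ i, (g i).comp (Pi.evalMonoidHom A i) with hf
  have hfapply : ∀ x, f x = ∏ i, g i (x i) := by
    intro x
    rw [hf, MonoidHom.finset_prod_apply]
    rfl
  have hfsingle : ∀ i (a : A i), f (MonoidHom.mulSingle A i a) = g i a := by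
    intro i a
    rw [hfapply, Finset.prod_eq_single i]
    · simp
    · intro i' _ hi'
      rw [MonoidHom.mulSingle_apply, Pi.mulSingle_eq_of_ne hi']
      exact map_one (g i')
    · exact fun h => absurd (Finset.mem_univ i) h
  refine ⟨D ⊓ f.ker, inf_le_left, ?_, ?_⟩
  · -- relindex bound
    haveI : Finite F := by
      refine Pi.finite
    have h1 : (D ⊓ f.ker).relIndex D = f.ker.relIndex D := by
      rw [inf_comm, Subgroup.inf_relIndex_right]
    have h2 : f.ker.relIndex D ≤ f.ker.index :=
      Nat.le_of_dvd (Nat.pos_of_ne_zero Subgroup.index_ne_zero_of_finite)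
        (Subgroup.relIndex_dvd_index_of_normal f.ker D)
    have h3 : f.ker.index ≤ Nat.card F := by
      rw [Subgroup.index_ker]
      exact Nat.le_of_dvd Nat.card_pos (Subgroup.card_subgroup_dvd_card f.range)
    have h4 : Nat.card F = p ^ ∑ j ∈ Finset.range k, k / (j + 1) := by
      rw [hF, Nat.card_pi]
      have : ∀ j : Fin k, Nat.card (Multiplicative (ZMod (p ^ (k / ((j : ℕ) + 1)))))
          = p ^ (k / ((j : ℕ) + 1)) := fun j => by
        rw [Nat.card_congr (Multiplicative.toAdd (α := ZMod _)), Nat.card_zmod]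
      rw [Finset.prod_congr rfl (fun j _ => this j), Finset.prod_pow_eq_pow_sum]
      congr 1
      exact Fin.sum_univ_eq_sum_range (fun j => k / (j + 1)) k
    rw [h1]
    refine le_trans h2 (le_trans h3 ?_)
    rw [h4]
    exact Nat.pow_le_pow_right hp.pos (sum_div_le_floor_mul_one_add_log k)
  · -- trivial intersection
    intro i
    rw [eq_bot_iff]
    rintro x ⟨⟨_, hxker⟩, a, rfl⟩
    have : g i a = 1 := by rw [← hfsingle i a]; exact hxker
    have ha : a = 1 := hginj i (by rw [this, map_one])
    rw [Subgroup.mem_bot, ha]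
    exact map_one _
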